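/- Let V be a Hausdorff locally convex topological vector space over ℝ and let C ⊆ V be a nonempty compact convex set carrying a group operation * (associative, with identity element e and inverses) such that for every a ∈ C the left translation x ↦ a*x is affine. Then C is a singleton, C = {e}. (There are no nontrivial compact convex groups with affine left translations.) -/

import Mathlib

/-- There are no nontrivial compact convex groups with affine left translations:
if a nonempty compact convex subset `C` of a Hausdorff locally convex real
topological vector space carries a group structure whose left translations are
affine, then `C` is the singleton of the identity. -/
theorem compact_convex_group_trivial
    {V : Type*} [AddCommGroup V] [Module ℝ V] [TopologicalSpace V]
    [IsTopologicalAddGroup V] [ContinuousSMul ℝ V] [T2Space V] [LocallyConvexSpace ℝ V]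
    (C : Set V) (hCne : C.Nonempty) (hCcomp : IsCompact C) (hCconv : Convex ℝ C)
    (mul : V → V → V) (e : V) (he : e ∈ C)
    (hclosed : ∀ a ∈ C, ∀ b ∈ C, mul a b ∈ C)
    (hassoc : ∀ a ∈ C, ∀ b ∈ C, ∀ c ∈ C, mul (mul a b) c = mul a (mul b c))
    (hid : ∀ a ∈ C, mul e a = a ∧ mul a e = a)
    (hinv : ∀ a ∈ C, ∃ b ∈ C, mul a b = e ∧ mul b a = e)
    (haff : ∀ a ∈ C, ∀ x ∈ C, ∀ y ∈ C, ∀ r : ℝ, 0 ≤ r → r ≤ 1 →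
      mul a (r • x + (1 - r) • y) = r • mul a x + (1 - r) • mul a y) :
    C = {e} := by
  -- cancellation
  have hcancel : ∀ a ∈ C, ∀ u ∈ C, ∀ v ∈ C, mul a u = mul a v → u = v := by
    intro a ha u hu v hv h
    obtain ⟨b, hb, hab, hba⟩ := hinv a ha
    have : mul b (mul a u) = mul b (mul a v) := by rw [h]
    rwa [← hassoc b hb a ha u hu, ← hassoc b hb a ha v hv, hba,
      (hid u hu).1, (hid v hv).1] at this
  -- extreme point from Krein–Milman
  obtain ⟨z, hz⟩ := hCcomp.extremePoints_nonempty hCne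
  rw [mem_extremePoints] at hz
  obtain ⟨hzC, hzext⟩ := hz
  -- any two elements of C are equal
  have key : ∀ a ∈ C, ∀ b ∈ C, a = b := by
    intro a ha b hb
    have hm : (1/2 : ℝ) • a + (1 - 1/2 : ℝ) • b ∈ C := hCconv ha hb (by norm_num) (by norm_num) (by norm_num)
    set m := (1/2 : ℝ) • a + (1 - 1/2 : ℝ) • b with hmdef
    obtain ⟨n, hn, hmn, hnm⟩ := hinv m hm
    have hu : mul n a ∈ C := hclosed n hn a ha
    have hv : mul n b ∈ C := hclosed n hn b hb
    have heq : e = (1/2 : ℝ) • mul n a + (1 - 1/2 : ℝ) • mul n b := by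
      rw [← haff n hn a ha b hb (1/2) (by norm_num) (by norm_num), ← hmdef, hnm]
    -- push through z
    have hz2 : mul z e = (1/2 : ℝ) • mul z (mul n a) + (1 - 1/2 : ℝ) • mul z (mul n b) := by
      rw [heq]
      exact haff z hzC _ hu _ hv (1/2) (by norm_num) (by norm_num)
    have hze : mul z e = z := (hid z hzC).2
    have hseg : z ∈ openSegment ℝ (mul z (mul n a)) (mul z (mul n b)) :=
      ⟨1/2, 1 - 1/2, by norm_num, by norm_num, by norm_num, by rw [← hz2, hze]⟩
    have hzu : mul z (mul n a) ∈ C := hclosed z hzC _ hu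
    have hzv : mul z (mul n b) ∈ C := hclosed z hzC _ hv
    obtain ⟨h1, h2⟩ := hzext _ hzu _ hzv hseg
    have huv : mul n a = mul n b := hcancel z hzC _ hu _ hv (h1.trans h2.symm)
    exact hcancel n hn a ha b hb huv
  ext x
  simp only [Set.mem_singleton_iff]
  exact ⟨fun hx => key x hx e he, fun hx => hx ▸ he⟩
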